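/- arXiv:1812.02955 — 3 statements merged into one kernel-verified Lean document; each statement's English description precedes it below -/
import Mathlib

section
/- For positive integers k and r, as an identity of formal power series over ℚ, Σ_{n≥0} S(n,k,r) · z^n/n! = (exp(z) − 1)^{r+k−1} / r!, where exp(z) denotes the formal exponential power series Σ_{n≥0} z^n/n!. -/
open Finset Function PowerSeries

private noncomputable def MSsurj (n t : ℕ) : ℕ :=
  Nat.card {f : Fin n → Fin t // Surjective f}

private def MSIsTup {n : ℕ} (s : Finset (Fin n)) {t : ℕ} (C : Fin t → Finset (Fin n)) : Prop :=
  (∀ i, (C i).Nonempty) ∧ (∀ i j, i ≠ j → Disjoint (C i) (C j)) ∧ Finset.univ.biUnion C = s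

private lemma MScard_sigma {ι : Type*} [Fintype ι] {α : ι → Type*} [∀ i, Finite (α i)] :
    Nat.card (Σ i, α i) = ∑ i, Nat.card (α i) := by
  classical
  letI : ∀ i, Fintype (α i) := fun i => Fintype.ofFinite _
  simp [Nat.card_eq_fintype_card, Fintype.card_sigma]

private def MSfib {n t : ℕ} (f : {f : Fin n → Fin t // Surjective f}) :
    {C : Fin t → Finset (Fin n) // MSIsTup Finset.univ C} :=
  ⟨fun i => Finset.univ.filter (fun a => f.1 a = i), by
    intro i
    obtain ⟨a, ha⟩ := f.2 i
    exact ⟨a, by simp [ha]⟩, by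
    intro i j hij
    simp only [Finset.disjoint_left, Finset.mem_filter]
    rintro a ⟨-, rfl⟩ ⟨-, h⟩
    exact hij h, by ext a; simp⟩

private lemma MSsurj_eq_tup (n t : ℕ) :
    MSsurj n t = Nat.card {C : Fin t → Finset (Fin n) // MSIsTup Finset.univ C} := by
  classical
  apply Nat.card_eq_of_bijective MSfib
  constructor
  · rintro ⟨f, hf⟩ ⟨g, hg⟩ h
    have h' := congrArg Subtype.val h
    apply Subtype.ext; funext a
    have := congrFun h' (f a)
    have ha : a ∈ Finset.univ.filter (fun b => f b = f a) := by simp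
    rw [show Finset.univ.filter (fun b => f b = f a)
        = Finset.univ.filter (fun b => g b = f a) from this] at ha
    simpa using (Finset.mem_filter.1 ha).2.symm
  · rintro ⟨C, h1, h2, h3⟩
    have hu : ∀ a : Fin n, ∃! i, a ∈ C i := by
      intro a
      have : a ∈ Finset.univ.biUnion C := by rw [h3]; exact Finset.mem_univ a
      obtain ⟨i, _, hi⟩ := Finset.mem_biUnion.1 this
      refine ⟨i, hi, fun j hj => ?_⟩
      by_contra hne
      exact (Finset.disjoint_left.1 (h2 j i hne)) hj hi
    refine ⟨⟨fun a => Fintype.choose _ (hu a), ?_⟩, ?_⟩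
    · intro i
      obtain ⟨a, ha⟩ := h1 i
      exact ⟨a, ((hu a).unique (Fintype.choose_spec _ (hu a)) ha)⟩
    · apply Subtype.ext
      funext i
      ext a
      simp only [MSfib, Finset.mem_filter, Finset.mem_univ, true_and]
      constructor
      · rintro rfl; exact Fintype.choose_spec _ (hu a)
      · intro ha; exact (hu a).unique (Fintype.choose_spec _ (hu a)) ha

private lemma MSsurj_congr {n : ℕ} {β : Type*} [Fintype β] :
    Nat.card {f : Fin n → β // Surjective f} = MSsurj n (Fintype.card β) := by
  classical
  set e := Fintype.equivFin β
  apply Nat.card_eq_of_bijective (fun f => ⟨e ∘ f.1, (e.surjective).comp f.2⟩)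
  constructor
  · rintro ⟨f, hf⟩ ⟨g, hg⟩ h
    apply Subtype.ext; funext a
    have := congrFun (congrArg Subtype.val h) a
    exact e.injective this
  · rintro ⟨g, hg⟩
    refine ⟨⟨e.symm ∘ g, (e.symm.surjective).comp hg⟩, ?_⟩
    apply Subtype.ext; funext a; simp

private lemma MSpow_eq (n t : ℕ) :
    t ^ n = ∑ j ∈ Finset.range (t + 1), t.choose j * MSsurj n j := by
  classical
  have h1 : Nat.card (Fin n → Fin t) = t ^ n := by
    simp [Nat.card_eq_fintype_card]
  have h2 : Nat.card (Σ s : Finset (Fin t), {g : Fin n → {x // x ∈ s} // Surjective g})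
      = Nat.card (Fin n → Fin t) := by
    apply Nat.card_eq_of_bijective (fun y => fun a => (y.2.1 a).val)
    constructor
    · rintro ⟨s, g, hg⟩ ⟨s', g', hg'⟩ h
      have hs : s = s' := by
        ext x
        constructor
        · intro hx
          obtain ⟨a, ha⟩ := hg ⟨x, hx⟩
          have := congrFun h a
          simp only [ha] at this
          rw [this] at *
          exact (g' a).2
        · intro hx
          obtain ⟨a, ha⟩ := hg' ⟨x, hx⟩
          have := congrFun h a
          simp only [ha] at this
          rw [← this] at *
          exact (g a).2
      subst hs
      have hgg : g = g' := by
        funext a; exact Subtype.ext (congrFun h a)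
      subst hgg
      rfl
    · intro f
      refine ⟨⟨Finset.univ.image f, fun a => ⟨f a, Finset.mem_image_of_mem f (Finset.mem_univ a)⟩,
        ?_⟩, rfl⟩
      rintro ⟨b, hb⟩
      obtain ⟨a, -, ha⟩ := Finset.mem_image.1 hb
      exact ⟨a, Subtype.ext ha⟩
  have h3 : Nat.card (Σ s : Finset (Fin t), {g : Fin n → {x // x ∈ s} // Surjective g})
      = ∑ s : Finset (Fin t), MSsurj n s.card := by
    rw [Nat.card_eq_fintype_card]
    letI : ∀ s : Finset (Fin t), Fintype {g : Fin n → {x // x ∈ s} // Surjective g} := by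
      intro s; infer_instance
    rw [Fintype.card_sigma]
    refine Finset.sum_congr rfl fun s _ => ?_
    rw [← Nat.card_eq_fintype_card, MSsurj_congr, Fintype.card_coe]
  have h4 : ∑ s : Finset (Fin t), MSsurj n s.card
      = ∑ j ∈ Finset.range (t + 1), t.choose j * MSsurj n j := by
    have := Finset.sum_powerset_apply_card (fun j => MSsurj n j) (x := (Finset.univ : Finset (Fin t)))
    rw [Finset.powerset_univ] at this
    simpa [Finset.card_univ, smul_eq_mul] using this
  omega

private noncomputable def MSA (t : ℕ) : PowerSeries ℚ :=
  PowerSeries.mk fun n => (MSsurj n t : ℚ) / n.factorial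

private lemma MSexp_pow (t : ℕ) :
    PowerSeries.exp ℚ ^ t
      = ∑ j ∈ Finset.range (t + 1), PowerSeries.C (t.choose j : ℚ) * MSA j := by
  ext n
  rw [PowerSeries.exp_pow_eq_rescale_exp, PowerSeries.coeff_rescale, PowerSeries.coeff_exp,
    map_sum]
  have hrhs : ∀ j ∈ Finset.range (t + 1),
      (PowerSeries.coeff n) (PowerSeries.C (t.choose j : ℚ) * MSA j)
        = (t.choose j : ℚ) * ((MSsurj n j : ℚ) / n.factorial) := by
    intro j _
    rw [PowerSeries.coeff_C_mul, MSA, PowerSeries.coeff_mk]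
  rw [Finset.sum_congr rfl hrhs]
  have hcast : ((t : ℚ)) ^ n
      = ∑ j ∈ Finset.range (t + 1), (t.choose j : ℚ) * (MSsurj n j : ℚ) := by
    have h := congrArg (fun x : ℕ => (x : ℚ)) (MSpow_eq n t)
    push_cast at h
    simpa using h
  simp only [mul_div_assoc'] 
  rw [← Finset.sum_div, ← hcast]
  simp only [Algebra.algebraMap_self_apply]
  ring

private lemma MSA_eq (t : ℕ) : MSA t = (PowerSeries.exp ℚ - 1) ^ t := by
  induction t using Nat.strong_induction_on with
  | _ t ih =>
    have h1 := MSexp_pow t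
    rw [Finset.sum_range_succ, Nat.choose_self] at h1
    have h1' : PowerSeries.exp ℚ ^ t
        = (∑ j ∈ Finset.range t,
            PowerSeries.C (t.choose j : ℚ) * (PowerSeries.exp ℚ - 1) ^ j) + MSA t := by
      rw [h1]
      congr 1
      · exact Finset.sum_congr rfl fun j hj => by rw [ih j (Finset.mem_range.1 hj)]
      · simp
    have h2 : PowerSeries.exp ℚ ^ t
        = (∑ j ∈ Finset.range t,
            PowerSeries.C (t.choose j : ℚ) * (PowerSeries.exp ℚ - 1) ^ j)
          + (PowerSeries.exp ℚ - 1) ^ t := by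
      have hxy : PowerSeries.exp ℚ = (PowerSeries.exp ℚ - 1) + 1 := by ring
      calc PowerSeries.exp ℚ ^ t = ((PowerSeries.exp ℚ - 1) + 1) ^ t := by rw [← hxy]
      _ = ∑ j ∈ Finset.range (t + 1),
            (PowerSeries.exp ℚ - 1) ^ j * 1 ^ (t - j) * (t.choose j : PowerSeries ℚ) := add_pow _ _ _
      _ = _ := by
          rw [Finset.sum_range_succ, Nat.choose_self]
          congr 1
          · refine Finset.sum_congr rfl fun j hj => ?_
            rw [one_pow, mul_one, mul_comm]
            norm_cast
          · simp
    exact add_left_cancel (h1'.symm.trans h2)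

private lemma MStup_inj {n t : ℕ} {s : Finset (Fin n)} {C : Fin t → Finset (Fin n)}
    (h : MSIsTup s C) : Function.Injective C := by
  intro i j hij
  by_contra hne
  have hd := h.2.1 i j hne
  rw [hij] at hd
  obtain ⟨a, ha⟩ := h.1 j
  exact (Finset.disjoint_left.1 hd) ha ha

private def MSpart {n t : ℕ} {s : Finset (Fin n)} (C : Fin t → Finset (Fin n))
    (h : MSIsTup s C) : Finpartition s where
  parts := Finset.univ.image C
  supIndep := by
    classical
    rw [Finset.supIndep_iff_pairwiseDisjoint]
    rintro p hp q hq hpq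
    simp only [Finset.coe_image, Set.mem_image] at hp hq
    obtain ⟨i, -, rfl⟩ := hp
    obtain ⟨j, -, rfl⟩ := hq
    exact h.2.1 i j fun hij => hpq (by rw [hij])
  sup_parts := by
    classical
    rw [Finset.sup_image, CompTriple.comp_eq, Finset.sup_eq_biUnion]
    exact h.2.2
  bot_notMem := by
    classical
    simp only [Finset.bot_eq_empty, Finset.mem_image]
    rintro ⟨i, -, hi⟩
    exact Finset.nonempty_iff_ne_empty.1 (h.1 i) hi

private lemma MSpart_parts {n t : ℕ} {s : Finset (Fin n)} (C : Fin t → Finset (Fin n))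
    (h : MSIsTup s C) : (MSpart C h).parts = Finset.univ.image C := rfl

private lemma MSpart_card {n t : ℕ} {s : Finset (Fin n)} (C : Fin t → Finset (Fin n))
    (h : MSIsTup s C) : (MSpart C h).parts.card = t := by
  classical
  rw [MSpart_parts, Finset.card_image_of_injective _ (MStup_inj h)]
  simp

private noncomputable def MSproj {n r : ℕ} {s : Finset (Fin n)}
    (c : {C : Fin r → Finset (Fin n) // MSIsTup s C}) :
    {π : Finpartition s // π.parts.card = r} :=
  ⟨MSpart c.1 c.2, MSpart_card c.1 c.2⟩

private lemma MSfiber_card {n r : ℕ} {s : Finset (Fin n)}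
    (π₀ : {π : Finpartition s // π.parts.card = r}) :
    Nat.card {c : {C : Fin r → Finset (Fin n) // MSIsTup s C} // MSproj c = π₀}
      = r.factorial := by
  classical
  have hcard : Nat.card (Fin r ≃ {p // p ∈ π₀.1.parts}) = r.factorial := by
    have e : {p // p ∈ π₀.1.parts} ≃ Fin r :=
      Fintype.equivFinOfCardEq (by rw [Fintype.card_coe, π₀.2])
    rw [Nat.card_eq_fintype_card, Fintype.card_equiv e.symm]
    simp
  rw [← hcard]
  symm
  -- the map from labellings to fibers
  have htup : ∀ e : Fin r ≃ {p // p ∈ π₀.1.parts}, MSIsTup s (fun i => (e i).1) := by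
    intro e
    have himg : Finset.univ.image (fun i => ((e i).1 : Finset (Fin n))) = π₀.1.parts := by
      ext p
      simp only [Finset.mem_image, Finset.mem_univ, true_and]
      constructor
      · rintro ⟨i, rfl⟩; exact (e i).2
      · intro hp; exact ⟨e.symm ⟨p, hp⟩, by simp⟩
    refine ⟨fun i => π₀.1.nonempty_of_mem_parts (e i).2, ?_, ?_⟩
    · intro i j hij
      have hne : ((e i).1 : Finset (Fin n)) ≠ (e j).1 := fun hv =>
        hij (e.injective (Subtype.ext hv))
      exact π₀.1.disjoint (e i).2 (e j).2 hne
    · have h1 : (Finset.univ.image (fun i => ((e i).1 : Finset (Fin n)))).sup id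
          = Finset.univ.sup (fun i => ((e i).1 : Finset (Fin n))) := by
        rw [Finset.sup_image]; rfl
      rw [← Finset.sup_eq_biUnion, ← h1, himg, π₀.1.sup_parts]
  apply Nat.card_eq_of_bijective
    (fun e : Fin r ≃ {p // p ∈ π₀.1.parts} =>
      (⟨⟨fun i => (e i).1, htup e⟩, by
        apply Subtype.ext
        apply Finpartition.ext
        rw [MSproj, MSpart_parts]
        ext p
        simp only [Finset.mem_image, Finset.mem_univ, true_and]
        constructor
        · rintro ⟨i, rfl⟩; exact (e i).2
        · intro hp; exact ⟨e.symm ⟨p, hp⟩, by simp⟩⟩ :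
        {c : {C : Fin r → Finset (Fin n) // MSIsTup s C} // MSproj c = π₀}))
  constructor
  · intro e e' h
    exact Equiv.ext fun i => Subtype.ext (congrFun (congrArg (fun c => c.1.1) h) i)
  · rintro ⟨⟨C, hC⟩, hproj⟩
    have hparts : Finset.univ.image C = π₀.1.parts := by
      have := congrArg (fun z => z.1.parts) hproj
      simpa [MSproj, MSpart_parts] using this
    have hg : Function.Bijective (fun i =>
        (⟨C i, by rw [← hparts]; exact Finset.mem_image_of_mem _ (Finset.mem_univ i)⟩ :
          {p // p ∈ π₀.1.parts})) := by
      constructor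
      · intro i j hij
        exact MStup_inj hC (by simpa [Subtype.ext_iff] using hij)
      · rintro ⟨p, hp⟩
        rw [← hparts] at hp
        obtain ⟨i, -, hi⟩ := Finset.mem_image.1 hp
        exact ⟨i, Subtype.ext hi⟩
    refine ⟨Equiv.ofBijective _ hg, ?_⟩
    apply Subtype.ext
    apply Subtype.ext
    funext i
    rfl

private lemma MStup_card (n r : ℕ) (s : Finset (Fin n)) :
    Nat.card {C : Fin r → Finset (Fin n) // MSIsTup s C}
      = r.factorial * Nat.card {π : Finpartition s // π.parts.card = r} := by
  classical
  rw [← Nat.card_congr (Equiv.sigmaFiberEquiv (MSproj (n := n) (r := r) (s := s)))]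
  rw [MScard_sigma]
  simp only [MSfiber_card]
  rw [Finset.sum_const, smul_eq_mul, mul_comm, Nat.card_eq_fintype_card, Finset.card_univ]

private def MSSubB (n m : ℕ) :=
  {B : Fin m → Finset (Fin n) // (∀ i, (B i).Nonempty) ∧ ∀ i j, i ≠ j → Disjoint (B i) (B j)}

private lemma MSsig_ext {ι γ : Type*} {Q : ι → γ → Prop} {x y : Σ i, {c : γ // Q i c}}
    (h1 : x.1 = y.1) (h2 : x.2.1 = y.2.1) : x = y := by
  obtain ⟨i, c, hc⟩ := x
  obtain ⟨j, d, hd⟩ := y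
  dsimp at h1 h2
  subst h1; subst h2; rfl

private lemma MSsplit (n m r : ℕ) :
    Nat.card {D : Fin (r + m) → Finset (Fin n) // MSIsTup Finset.univ D}
      = Nat.card (Σ B : MSSubB n m,
          {C : Fin r → Finset (Fin n) // MSIsTup (Finset.univ \ Finset.univ.biUnion B.1) C}) := by
  classical
  have hBprop : ∀ d : {D : Fin (r + m) → Finset (Fin n) // MSIsTup Finset.univ D},
      (∀ j, (d.1 (Fin.natAdd r j)).Nonempty) ∧
      ∀ i j, i ≠ j → Disjoint (d.1 (Fin.natAdd r i)) (d.1 (Fin.natAdd r j)) := by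
    intro d
    refine ⟨fun j => d.2.1 _, fun i j hij => d.2.2.1 _ _ ?_⟩
    simp only [ne_eq, Fin.ext_iff, Fin.coe_natAdd]
    have : (i : ℕ) ≠ (j : ℕ) := fun h => hij (Fin.ext h)
    omega
  have hCprop : ∀ d : {D : Fin (r + m) → Finset (Fin n) // MSIsTup Finset.univ D},
      MSIsTup (Finset.univ \ Finset.univ.biUnion (fun j => d.1 (Fin.natAdd r j)))
        (fun i => d.1 (Fin.castAdd m i)) := by
    intro d
    refine ⟨fun i => d.2.1 _, fun i j hij => d.2.2.1 _ _ ?_, ?_⟩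
    · simp only [ne_eq, Fin.ext_iff, Fin.coe_castAdd]
      have : (i : ℕ) ≠ (j : ℕ) := fun h => hij (Fin.ext h)
      omega
    · ext a
      simp only [Finset.mem_biUnion, Finset.mem_univ, true_and, Finset.mem_sdiff]
      constructor
      · rintro ⟨i, hi⟩ ⟨j, hj⟩
        have hne : Fin.castAdd m i ≠ Fin.natAdd r j := by
          simp only [ne_eq, Fin.ext_iff, Fin.coe_castAdd, Fin.coe_natAdd]
          omega
        exact (Finset.disjoint_left.1 (d.2.2.1 _ _ hne)) hi hj
      · intro hnb
        have : a ∈ Finset.univ.biUnion d.1 := by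
          rw [d.2.2.2]; exact Finset.mem_univ a
        obtain ⟨t, -, ht⟩ := Finset.mem_biUnion.1 this
        by_cases htr : (t : ℕ) < r
        · refine ⟨⟨(t : ℕ), htr⟩, ?_⟩
          have : Fin.castAdd m ⟨(t : ℕ), htr⟩ = t := by
            apply Fin.ext; simp
          rwa [this]
        · exfalso
          apply hnb
          refine ⟨⟨(t : ℕ) - r, by omega⟩, ?_⟩
          have : Fin.natAdd r ⟨(t : ℕ) - r, by omega⟩ = t := by
            apply Fin.ext; simp; omega
          rwa [this]
  apply Nat.card_eq_of_bijective (fun d =>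
    ⟨⟨fun j => d.1 (Fin.natAdd r j), hBprop d⟩, ⟨fun i => d.1 (Fin.castAdd m i), hCprop d⟩⟩)
  constructor
  · intro d d' h
    have hB := congrArg (fun y => y.1.1) h
    have hC := congrArg (fun y => y.2.1) h
    dsimp at hB hC
    apply Subtype.ext
    funext t
    cases t using Fin.addCases with
    | left i => exact congrFun hC i
    | right j => exact congrFun hB j
  · rintro ⟨⟨B, hB1, hB2⟩, ⟨C, hC⟩⟩
    set D : Fin (r + m) → Finset (Fin n) :=
      fun t => Fin.addCases (motive := fun _ => Finset (Fin n)) C B t with hD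
    have DL : ∀ i, D (Fin.castAdd m i) = C i := fun i => by simp [hD]
    have DR : ∀ j, D (Fin.natAdd r j) = B j := fun j => by simp [hD]
    have hCB : ∀ i j, Disjoint (C i) (B j) := by
      intro i j
      rw [Finset.disjoint_left]
      intro a ha hb
      have h1 : a ∈ Finset.univ.biUnion C :=
        Finset.mem_biUnion.2 ⟨i, Finset.mem_univ i, ha⟩
      rw [hC.2.2] at h1
      exact (Finset.mem_sdiff.1 h1).2 (Finset.mem_biUnion.2 ⟨j, Finset.mem_univ j, hb⟩)
    have hDtup : MSIsTup Finset.univ D := by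
      refine ⟨?_, ?_, ?_⟩
      · intro t
        cases t using Fin.addCases with
        | left i => rw [DL]; exact hC.1 i
        | right j => rw [DR]; exact hB1 j
      · intro t t' hne
        cases t using Fin.addCases with
        | left i =>
          cases t' using Fin.addCases with
          | left i' =>
            rw [DL, DL]
            exact hC.2.1 i i' fun hii => hne (by rw [hii])
          | right j' => rw [DL, DR]; exact hCB i j'
        | right j =>
          cases t' using Fin.addCases with
          | left i' => rw [DR, DL]; exact (hCB i' j).symm
          | right j' =>
            rw [DR, DR]
            exact hB2 j j' fun hjj => hne (by rw [hjj])
      · rw [Finset.eq_univ_iff_forall]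
        intro a
        rw [Finset.mem_biUnion]
        by_cases haB : a ∈ Finset.univ.biUnion B
        · obtain ⟨j, -, hj⟩ := Finset.mem_biUnion.1 haB
          exact ⟨Fin.natAdd r j, Finset.mem_univ _, by rw [DR]; exact hj⟩
        · have : a ∈ Finset.univ.biUnion C := by
            rw [hC.2.2, Finset.mem_sdiff]
            exact ⟨Finset.mem_univ a, haB⟩
          obtain ⟨i, -, hi⟩ := Finset.mem_biUnion.1 this
          exact ⟨Fin.castAdd m i, Finset.mem_univ _, by rw [DL]; exact hi⟩
    refine ⟨⟨D, hDtup⟩, ?_⟩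
    apply MSsig_ext
    · exact Subtype.ext (funext fun j => DR j)
    · exact funext fun i => DL i


private lemma MSkey (n m r : ℕ) :
    MSsurj n (r + m)
      = r.factorial * Nat.card {x : Σ B : Fin m → Finset (Fin n),
          Finpartition ((Finset.univ : Finset (Fin n)) \ Finset.univ.biUnion B) //
        (∀ i, (x.1 i).Nonempty) ∧ (∀ i j, i ≠ j → Disjoint (x.1 i) (x.1 j)) ∧
        x.2.parts.card = r} := by
  classical
  rw [MSsurj_eq_tup, MSsplit n m r]
  letI : Finite (MSSubB n m) := by unfold MSSubB; infer_instance
  letI : Fintype (MSSubB n m) := Fintype.ofFinite _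
  rw [MScard_sigma]
  rw [Finset.sum_congr rfl (fun B _ => MStup_card n r _), ← Finset.mul_sum]
  congr 1
  rw [← MScard_sigma]
  apply Nat.card_eq_of_bijective
    (fun y : Σ B : MSSubB n m,
        {π : Finpartition (Finset.univ \ Finset.univ.biUnion B.1) // π.parts.card = r} =>
      (⟨⟨y.1.1, y.2.1⟩, y.1.2.1, y.1.2.2, y.2.2⟩ :
        {x : Σ B : Fin m → Finset (Fin n),
          Finpartition ((Finset.univ : Finset (Fin n)) \ Finset.univ.biUnion B) //
        (∀ i, (x.1 i).Nonempty) ∧ (∀ i j, i ≠ j → Disjoint (x.1 i) (x.1 j)) ∧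
        x.2.parts.card = r}))
  constructor
  · rintro ⟨⟨B, hB⟩, ⟨π, hπ⟩⟩ ⟨⟨B', hB'⟩, ⟨π', hπ'⟩⟩ h
    have hv := congrArg Subtype.val h
    dsimp at hv
    injection hv with h1 h2
    subst h1
    rw [heq_iff_eq] at h2
    subst h2
    rfl
  · rintro ⟨⟨B, π⟩, h1, h2, h3⟩
    exact ⟨⟨⟨B, h1, h2⟩, ⟨π, h3⟩⟩, rfl⟩

/-- The mixed Stirling number of the second kind `S(n, k, r)`: the number of pairs
`(π, (B_2, …, B_k))` where `B_2, …, B_k` are pairwise disjoint nonempty subsets of `{1, …, n}`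
and `π` is a partition of the complement of their union into exactly `r` nonempty blocks. -/
noncomputable def mixedStirling (n k r : ℕ) : ℕ :=
  Nat.card {x : Σ B : Fin (k - 1) → Finset (Fin n),
      Finpartition ((Finset.univ : Finset (Fin n)) \ Finset.univ.biUnion B) //
    (∀ i, (x.1 i).Nonempty) ∧
    (∀ i j, i ≠ j → Disjoint (x.1 i) (x.1 j)) ∧
    x.2.parts.card = r}

theorem mixedStirling_egf (k r : ℕ) (hk : 1 ≤ k) (hr : 1 ≤ r) :
    (PowerSeries.mk fun n => (mixedStirling n k r : ℚ) / n.factorial) =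
      PowerSeries.C ((r.factorial : ℚ))⁻¹ *
        (PowerSeries.exp ℚ - 1) ^ (r + k - 1) := by
  have hM : r + k - 1 = r + (k - 1) := by omega
  rw [hM, ← MSA_eq]
  have key : ∀ n, (MSsurj n (r + (k - 1)) : ℚ)
      = r.factorial * mixedStirling n k r := by
    intro n
    have h1 := MSkey n (k - 1) r
    have h2 : mixedStirling n k r = Nat.card {x : Σ B : Fin (k - 1) → Finset (Fin n),
        Finpartition ((Finset.univ : Finset (Fin n)) \ Finset.univ.biUnion B) //
      (∀ i, (x.1 i).Nonempty) ∧
      (∀ i j, i ≠ j → Disjoint (x.1 i) (x.1 j)) ∧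
      x.2.parts.card = r} := rfl
    rw [← h2] at h1
    exact_mod_cast congrArg (fun x : ℕ => (x : ℚ)) h1
  ext n
  rw [PowerSeries.coeff_mk, PowerSeries.coeff_C_mul, MSA, PowerSeries.coeff_mk, key n]
  have hfac : (r.factorial : ℚ) ≠ 0 := Nat.cast_ne_zero.2 r.factorial_ne_zero
  field_simp
end

section
/- For integers n ≥ 0, k ≥ 1 and 1 ≤ ℓ ≤ m, the doubly restricted Stirling numbers of the second kind satisfy the recurrence {n+1 brace k}_{≤m}^{≥ℓ} = Σ_{i=ℓ−1}^{m−1} (n choose i) · {n−i brace k−1}_{≤m}^{≥ℓ}, where the binomial coefficient (n choose i) is 0 for i > n and terms with n−i < 0 are taken to be 0. -/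
/-- The doubly restricted Stirling number of the second kind `{n brace k}_{≤ m}^{≥ ℓ}`: the
number of partitions of an `n`-element set into exactly `k` nonempty blocks such that each
block contains at least `ℓ` and at most `m` elements. -/
noncomputable def stirlingBetween (l m n k : ℕ) : ℕ :=
  Nat.card {P : Finpartition (Finset.univ : Finset (Fin n)) //
    P.parts.card = k ∧ ∀ B ∈ P.parts, l ≤ B.card ∧ B.card ≤ m}

open Finset

namespace StirlingAux

variable {α β : Type*} [DecidableEq α] [DecidableEq β]

/-- Transport a finpartition of a finset along an embedding. -/
def mapEmb (f : α ↪ β) {s : Finset α} (P : Finpartition s) : Finpartition (s.map f) where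
  parts := P.parts.image (Finset.map f)
  supIndep := by
    rw [Finset.supIndep_iff_pairwiseDisjoint]
    rintro B hB C hC hne
    simp only [coe_image, Set.mem_image, mem_coe] at hB hC
    obtain ⟨B', hB', rfl⟩ := hB
    obtain ⟨C', hC', rfl⟩ := hC
    have hne' : B' ≠ C' := by rintro rfl; exact hne rfl
    simpa [Function.onFun, Finset.disjoint_map] using P.disjoint hB' hC' hne'
  sup_parts := by
    rw [Finset.sup_image]
    ext b
    simp only [Finset.mem_sup, CompTriple.comp_eq, Finset.mem_map]
    constructor
    · rintro ⟨t, ht, x, hx, rfl⟩; exact ⟨x, P.le ht hx, rfl⟩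
    · rintro ⟨x, hx, rfl⟩
      obtain ⟨t, ht, hxt⟩ := P.exists_mem hx
      exact ⟨t, ht, x, hxt, rfl⟩
  bot_notMem := by
    simp only [bot_eq_empty, mem_image, not_exists]
    rintro C ⟨hC, h⟩
    exact P.bot_notMem (by
      have : C = ∅ := Finset.map_eq_empty.1 h
      rwa [this] at hC)

lemma parts_mapEmb (f : α ↪ β) {s : Finset α} (P : Finpartition s) :
    (mapEmb f P).parts = P.parts.image (Finset.map f) := rfl

lemma card_mapEmb (l m k : ℕ) (f : α ↪ β) (s : Finset α) :
    Nat.card {P : Finpartition s //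
        P.parts.card = k ∧ ∀ B ∈ P.parts, l ≤ B.card ∧ B.card ≤ m} =
    Nat.card {P : Finpartition (s.map f) //
        P.parts.card = k ∧ ∀ B ∈ P.parts, l ≤ B.card ∧ B.card ≤ m} := by
  apply Nat.card_eq_of_bijective
    (f := fun P => ⟨mapEmb f P.1, by
      rw [parts_mapEmb, Finset.card_image_of_injective _ (Finset.map_injective f), P.2.1], by
      intro B hB
      rw [parts_mapEmb] at hB
      obtain ⟨C, hC, rfl⟩ := Finset.mem_image.1 hB
      simpa using P.2.2 C hC⟩)
  constructor
  · rintro ⟨P, hP⟩ ⟨P', hP'⟩ h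
    simp only [Subtype.mk.injEq] at h ⊢
    ext1
    have := congrArg Finpartition.parts h
    rw [parts_mapEmb, parts_mapEmb] at this
    exact Finset.image_injective (Finset.map_injective f) this
  · rintro ⟨Q, hQc, hQs⟩
    have hkey : ∀ C ∈ Q.parts, (s.filter fun x => f x ∈ C).map f = C := by
      intro C hC
      ext b
      simp only [Finset.mem_map, Finset.mem_filter]
      constructor
      · rintro ⟨x, ⟨_, hx⟩, rfl⟩; exact hx
      · intro hb
        have hbs : b ∈ s.map f := Q.le hC hb
        obtain ⟨x, hx, rfl⟩ := Finset.mem_map.1 hbs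
        exact ⟨x, ⟨hx, hb⟩, rfl⟩
    have hinj : Set.InjOn (fun C => s.filter fun x => f x ∈ C) (Q.parts : Set (Finset β)) := by
      intro C₁ h₁ C₂ h₂ h
      rw [← hkey C₁ (Finset.mem_coe.1 h₁), ← hkey C₂ (Finset.mem_coe.1 h₂)]
      exact congrArg (Finset.map f) h
    refine ⟨⟨⟨Q.parts.image (fun C => s.filter fun x => f x ∈ C), ?_, ?_, ?_⟩, ?_, ?_⟩, ?_⟩
    · rw [Finset.supIndep_iff_pairwiseDisjoint]
      rintro B hB C hC hne
      simp only [coe_image, Set.mem_image, mem_coe] at hB hC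
      obtain ⟨B', hB', rfl⟩ := hB
      obtain ⟨C', hC', rfl⟩ := hC
      have hne' : B' ≠ C' := by rintro rfl; exact hne rfl
      have hd := Q.disjoint hB' hC' hne'
      simp only [Function.onFun, id] at hd ⊢
      rw [Finset.disjoint_left]
      intro x hx₁ hx₂
      rw [Finset.mem_filter] at hx₁ hx₂
      exact (Finset.disjoint_left.1 hd) hx₁.2 hx₂.2
    · ext x
      simp only [Finset.mem_sup, Finset.mem_image, id]
      constructor
      · rintro ⟨B, ⟨C, hC, rfl⟩, hx⟩
        exact (Finset.mem_filter.1 hx).1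
      · intro hx
        have : f x ∈ s.map f := Finset.mem_map_of_mem f hx
        rw [← Q.sup_parts, Finset.mem_sup] at this
        obtain ⟨C, hC, hfx⟩ := this
        exact ⟨_, ⟨C, hC, rfl⟩, Finset.mem_filter.2 ⟨hx, hfx⟩⟩
    · simp only [bot_eq_empty, Finset.mem_image, not_exists]
      rintro C ⟨hC, h⟩
      have hCne := Q.nonempty_of_mem_parts hC
      obtain ⟨b, hb⟩ := hCne
      have hbs : b ∈ s.map f := Q.le hC hb
      obtain ⟨x, hx, rfl⟩ := Finset.mem_map.1 hbs
      have : x ∈ s.filter fun x => f x ∈ C := Finset.mem_filter.2 ⟨hx, hb⟩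
      rw [h] at this
      exact absurd this (Finset.notMem_empty x)
    · rw [Finset.card_image_of_injOn hinj]; exact hQc
    · intro B hB
      obtain ⟨C, hC, rfl⟩ := Finset.mem_image.1 hB
      have hcc : (s.filter fun x => f x ∈ C).card = C.card := by
        have h' := congrArg Finset.card (hkey C hC)
        rwa [Finset.card_map] at h'
      rw [hcc]; exact hQs C hC
    · apply Subtype.ext
      apply Finpartition.ext
      rw [parts_mapEmb]
      simp only
      rw [Finset.image_image]
      refine (Finset.image_congr ?_).trans Finset.image_id
      intro C hC
      exact hkey C hC

lemma card_eq_stirling (l m k : ℕ) (s : Finset α) :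
    Nat.card {P : Finpartition s //
        P.parts.card = k ∧ ∀ B ∈ P.parts, l ≤ B.card ∧ B.card ≤ m} =
    stirlingBetween l m s.card k := by
  classical
  let f : Fin s.card ↪ α :=
    (s.equivFin.symm.toEmbedding).trans (Function.Embedding.subtype _)
  have hmap : (Finset.univ : Finset (Fin s.card)).map f = s := by
    ext x
    simp only [Finset.mem_map, Finset.mem_univ, true_and, f,
      Function.Embedding.trans_apply, Equiv.coe_toEmbedding, Function.Embedding.coe_subtype]
    constructor
    · rintro ⟨i, rfl⟩; exact (s.equivFin.symm i).2
    · intro hx; exact ⟨s.equivFin ⟨x, hx⟩, by simp⟩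
  have h := card_mapEmb l m k f (Finset.univ : Finset (Fin s.card))
  rw [hmap] at h
  exact h.symm

lemma parts_avoid_of_mem {s : Finset α} (P : Finpartition s) {B : Finset α}
    (hB : B ∈ P.parts) : (P.avoid B).parts = P.parts.erase B := by
  ext C
  rw [Finpartition.mem_avoid, Finset.mem_erase]
  constructor
  · rintro ⟨d, hd, hdB, rfl⟩
    have hne : d ≠ B := fun h => hdB (h ▸ le_rfl)
    have hsd : d \ B = d := sdiff_eq_self_iff_disjoint.2 ((P.disjoint hd hB hne).symm)
    rw [hsd]
    exact ⟨hne, hd⟩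
  · rintro ⟨hne, hC⟩
    refine ⟨C, hC, ?_, sdiff_eq_self_iff_disjoint.2 ((P.disjoint hC hB hne).symm)⟩
    intro hle
    have hd := P.disjoint hC hB hne
    have : C = ⊥ := hd.eq_bot_of_le hle
    exact P.bot_notMem (this ▸ hC)

lemma count_subsets {γ : Type*} [Fintype γ] [DecidableEq γ] (a : γ) (j : ℕ) :
    (Finset.univ.filter fun B : Finset γ => a ∈ B ∧ B.card = j + 1).card =
      (Fintype.card γ - 1).choose j := by
  have hcard : ((Finset.univ : Finset γ).erase a).card = Fintype.card γ - 1 := by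
    rw [Finset.card_erase_of_mem (Finset.mem_univ a), Finset.card_univ]
  rw [← hcard, ← Finset.card_powersetCard]
  apply Finset.card_nbij' (i := fun B => B.erase a) (j := fun C => insert a C)
  · intro B hB
    simp only [Finset.mem_coe, Finset.mem_filter, Finset.mem_univ, true_and] at hB
    rw [Finset.mem_coe, Finset.mem_powersetCard]
    exact ⟨Finset.erase_subset_erase a (Finset.subset_univ B),
      by rw [Finset.card_erase_of_mem hB.1, hB.2]; rfl⟩
  · intro C hC
    rw [Finset.mem_coe, Finset.mem_powersetCard] at hC
    have haC : a ∉ C := fun h => (Finset.mem_erase.1 (hC.1 h)).1 rfl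
    simp only [Finset.mem_coe, Finset.mem_filter, Finset.mem_univ, true_and]
    exact ⟨Finset.mem_insert_self a C, by rw [Finset.card_insert_of_notMem haC, hC.2]⟩
  · intro B hB
    simp only [Finset.mem_coe, Finset.mem_filter] at hB
    exact Finset.insert_erase hB.2.1
  · intro C hC
    rw [Finset.mem_coe, Finset.mem_powersetCard] at hC
    have haC : a ∉ C := fun h => (Finset.mem_erase.1 (hC.1 h)).1 rfl
    exact Finset.erase_insert haC

lemma sigma_ext_aux {γ : Type*} [Fintype γ] [DecidableEq γ] {pred : Finset γ → Prop}
    {l' m' k' : ℕ} {B B' : Finset γ} (hB : pred B) (hB' : pred B')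
    (Q : {Q : Finpartition ((Finset.univ : Finset γ) \ B) //
        Q.parts.card = k' ∧ ∀ C ∈ Q.parts, l' ≤ C.card ∧ C.card ≤ m'})
    (Q' : {Q : Finpartition ((Finset.univ : Finset γ) \ B') //
        Q.parts.card = k' ∧ ∀ C ∈ Q.parts, l' ≤ C.card ∧ C.card ≤ m'})
    (h : B = B') (hQ : Q.1.parts = Q'.1.parts) :
    (⟨⟨B, hB⟩, Q⟩ : Σ b : {B : Finset γ // pred B},
        {Q : Finpartition ((Finset.univ : Finset γ) \ b.1) //
          Q.parts.card = k' ∧ ∀ C ∈ Q.parts, l' ≤ C.card ∧ C.card ≤ m'}) = ⟨⟨B', hB'⟩, Q'⟩ := by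
  subst h
  have hQQ : Q = Q' := Subtype.ext (Finpartition.ext hQ)
  subst hQQ
  rfl

end StirlingAux

open StirlingAux in
theorem stirlingBetween_recurrence (n k l m : ℕ) (hk : 1 ≤ k) (hl : 1 ≤ l) (hlm : l ≤ m) :
    stirlingBetween l m (n + 1) k =
      ∑ i ∈ Finset.Icc (l - 1) (m - 1),
        n.choose i * stirlingBetween l m (n - i) (k - 1) := by
  classical
  set a : Fin (n + 1) := 0 with ha
  let pred : Finset (Fin (n + 1)) → Prop := fun B => a ∈ B ∧ l ≤ B.card ∧ B.card ≤ m
  let T := {B : Finset (Fin (n + 1)) // pred B}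
  let F : T → Type := fun b =>
    {Q : Finpartition ((Finset.univ : Finset (Fin (n + 1))) \ b.1) //
      Q.parts.card = k - 1 ∧ ∀ C ∈ Q.parts, l ≤ C.card ∧ C.card ≤ m}
  have hbney : ∀ b : T, b.1 ≠ (⊥ : Finset (Fin (n + 1))) := fun b => by
    have hne : b.1.Nonempty := ⟨a, b.2.1⟩
    simpa [Finset.bot_eq_empty] using hne.ne_empty
  have hdisjb : ∀ b : T, Disjoint ((Finset.univ : Finset (Fin (n + 1))) \ b.1) b.1 :=
    fun b => sdiff_disjoint
  have hsupb : ∀ b : T,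
      ((Finset.univ : Finset (Fin (n + 1))) \ b.1) ⊔ b.1 = (Finset.univ : Finset (Fin (n + 1))) :=
    fun b => sdiff_sup_cancel (Finset.subset_univ b.1)
  have hnotmem : ∀ (b : T) (Q : Finpartition ((Finset.univ : Finset (Fin (n + 1))) \ b.1)),
      b.1 ∉ Q.parts := by
    intro b Q h
    have hle := Q.le h
    exact hbney b (disjoint_self.1 ((hdisjb b).mono_left hle))
  let fwd : {P : Finpartition (Finset.univ : Finset (Fin (n + 1))) //
      P.parts.card = k ∧ ∀ B ∈ P.parts, l ≤ B.card ∧ B.card ≤ m} → Σ b : T, F b :=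
    fun P => ⟨⟨P.1.part a, P.1.mem_part (Finset.mem_univ a),
        (P.2.2 _ (P.1.part_mem.2 (Finset.mem_univ a))).1,
        (P.2.2 _ (P.1.part_mem.2 (Finset.mem_univ a))).2⟩,
      P.1.avoid (P.1.part a), by
        rw [parts_avoid_of_mem _ (P.1.part_mem.2 (Finset.mem_univ a)),
          Finset.card_erase_of_mem (P.1.part_mem.2 (Finset.mem_univ a)), P.2.1], by
        intro C hC
        rw [parts_avoid_of_mem _ (P.1.part_mem.2 (Finset.mem_univ a))] at hC
        exact P.2.2 C (Finset.mem_of_mem_erase hC)⟩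
  let bwd : (Σ b : T, F b) → {P : Finpartition (Finset.univ : Finset (Fin (n + 1))) //
      P.parts.card = k ∧ ∀ B ∈ P.parts, l ≤ B.card ∧ B.card ≤ m} :=
    fun x => ⟨x.2.1.extend (hbney x.1) (hdisjb x.1) (hsupb x.1), by
        rw [Finpartition.extend_parts,
          Finset.card_insert_of_notMem (hnotmem x.1 x.2.1), x.2.2.1]
        omega, by
        intro C hC
        rw [Finpartition.extend_parts, Finset.mem_insert] at hC
        rcases hC with rfl | hC
        · exact ⟨x.1.2.2.1, x.1.2.2.2⟩
        · exact x.2.2.2 C hC⟩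
  have key : stirlingBetween l m (n + 1) k = Nat.card (Σ b : T, F b) := by
    refine Nat.card_congr ⟨fwd, bwd, ?_, ?_⟩
    · intro P
      apply Subtype.ext
      apply Finpartition.ext
      show insert ((P.1).part a) ((P.1).avoid ((P.1).part a)).parts = (P.1).parts
      rw [parts_avoid_of_mem _ (P.1.part_mem.2 (Finset.mem_univ a))]
      exact Finset.insert_erase (P.1.part_mem.2 (Finset.mem_univ a))
    · rintro ⟨⟨B, hB⟩, Q, hQ⟩
      have hBE : B ∈ (Q.extend (hbney ⟨B, hB⟩) (hdisjb ⟨B, hB⟩) (hsupb ⟨B, hB⟩)).parts := by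
        rw [Finpartition.extend_parts]; exact Finset.mem_insert_self _ _
      have hpart : (Q.extend (hbney ⟨B, hB⟩) (hdisjb ⟨B, hB⟩) (hsupb ⟨B, hB⟩)).part a = B :=
        Finpartition.part_eq_of_mem _ hBE hB.1
      refine sigma_ext_aux _ _ _ _ hpart ?_
      show ((Q.extend (hbney ⟨B, hB⟩) (hdisjb ⟨B, hB⟩) (hsupb ⟨B, hB⟩)).avoid
          ((Q.extend (hbney ⟨B, hB⟩) (hdisjb ⟨B, hB⟩) (hsupb ⟨B, hB⟩)).part a)).parts = Q.parts
      rw [parts_avoid_of_mem _ ((Finpartition.part_mem _).2 (Finset.mem_univ a)), hpart,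
        Finpartition.extend_parts]
      exact Finset.erase_insert (hnotmem ⟨B, hB⟩ Q)
  rw [key, Nat.card_eq_fintype_card, Fintype.card_sigma]
  have hFb : ∀ b : T, Fintype.card (F b) =
      stirlingBetween l m (n - (b.1.card - 1)) (k - 1) := by
    intro b
    rw [← Nat.card_eq_fintype_card]
    have h := card_eq_stirling l m (k - 1) ((Finset.univ : Finset (Fin (n + 1))) \ b.1)
    rw [Finset.card_sdiff_of_subset (Finset.subset_univ _), Finset.card_univ, Fintype.card_fin] at h
    rw [h]
    congr 1
    have h1 : 1 ≤ b.1.card := le_trans hl b.2.2.1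
    omega
  rw [Finset.sum_congr rfl (fun b _ => hFb b)]
  rw [← Finset.sum_subtype (Finset.univ.filter pred) (by intro x; simp [pred])
    (fun B => stirlingBetween l m (n - (B.card - 1)) (k - 1))]
  have hmapsto : ∀ B ∈ Finset.univ.filter pred,
      B.card - 1 ∈ Finset.Icc (l - 1) (m - 1) := by
    intro B hB
    simp only [Finset.mem_filter, pred] at hB
    rw [Finset.mem_Icc]
    omega
  rw [← Finset.sum_fiberwise_of_maps_to hmapsto
    (fun B : Finset (Fin (n + 1)) => stirlingBetween l m (n - (B.card - 1)) (k - 1))]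
  apply Finset.sum_congr rfl
  intro i hi
  rw [Finset.mem_Icc] at hi
  have hfil : ((Finset.univ.filter pred).filter fun B => B.card - 1 = i) =
      Finset.univ.filter (fun B : Finset (Fin (n + 1)) => a ∈ B ∧ B.card = i + 1) := by
    ext B
    simp only [Finset.mem_filter, Finset.mem_univ, true_and, pred]
    constructor
    · rintro ⟨⟨h1, h2, h3⟩, h4⟩; exact ⟨h1, by omega⟩
    · rintro ⟨h1, h2⟩
      exact ⟨⟨h1, by omega, by omega⟩, by omega⟩
  rw [hfil]
  rw [Finset.sum_congr rfl (fun B hB => by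
    rw [(Finset.mem_filter.1 hB).2.2])]
  rw [Finset.sum_const, count_subsets, smul_eq_mul]
  congr 2
  simp
end

section
/- For positive integers n, k and r with r ≤ k ≤ n, the r-Stirling number of the second kind satisfies {n brace k}_r = Σ_{i=0}^{r} (r choose i) · S(n−r, i+1, k−r). -/
/-- The `r`-Stirling number of the second kind `{n brace k}_r`: the number of partitions of
`{1, …, n}` into exactly `k` nonempty blocks such that the elements `1, …, r` lie in distinct
blocks. -/
noncomputable def rStirling (n k r : ℕ) : ℕ :=
  Nat.card {P : Finpartition (Finset.univ : Finset (Fin n)) //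
    P.parts.card = k ∧
      ∀ B ∈ P.parts, (B.filter (fun a : Fin n => (a : ℕ) < r)).card ≤ 1}

open Finset

abbrev YSig (m r : ℕ) :=
  Σ f : Fin r → Finset (Fin m),
    Finpartition ((Finset.univ : Finset (Fin m)) \ Finset.univ.biUnion f)

abbrev YTy (m r s : ℕ) :=
  {x : YSig m r //
    (∀ i j, i ≠ j → Disjoint (x.1 i) (x.1 j)) ∧ x.2.parts.card = s}

abbrev MixedTy (n k r : ℕ) :=
  {x : Σ B : Fin (k - 1) → Finset (Fin n),
      Finpartition ((Finset.univ : Finset (Fin n)) \ Finset.univ.biUnion B) //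
    (∀ i, (x.1 i).Nonempty) ∧
    (∀ i j, i ≠ j → Disjoint (x.1 i) (x.1 j)) ∧
    x.2.parts.card = r}

abbrev LTy (n k r : ℕ) :=
  {P : Finpartition (Finset.univ : Finset (Fin n)) //
    P.parts.card = k ∧
      ∀ B ∈ P.parts, (B.filter (fun a : Fin n => (a : ℕ) < r)).card ≤ 1}

lemma mixedStirling_eq_card (n k r : ℕ) :
    mixedStirling n k r = Nat.card (MixedTy n k r) := rfl

lemma rStirling_eq_card (n k r : ℕ) : rStirling n k r = Nat.card (LTy n k r) := rfl

lemma YSig.ext' {m r : ℕ} {x y : YSig m r} (h1 : x.1 = y.1) (h2 : x.2.parts = y.2.parts) :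
    x = y := by
  obtain ⟨f, P⟩ := x; obtain ⟨g, Q⟩ := y
  dsimp at h1; subst h1
  exact congrArg (Sigma.mk f) (Finpartition.ext h2)

section A

variable {n r : ℕ}

/-- The order-preserving embedding of `Fin (n-r)` into `Fin n` hitting values `≥ r`. -/
def eRS (b : Fin (n - r)) : Fin n := ⟨r + b.val, by have := b.2; omega⟩

lemma eRS_inj : Function.Injective (eRS (n := n) (r := r)) := by
  intro a b h
  have := congrArg Fin.val h
  simp only [eRS] at this
  exact Fin.ext (by omega)

lemma le_eRS (b : Fin (n - r)) : r ≤ ((eRS b : Fin n) : ℕ) := Nat.le_add_right r b.val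

/-- Preimage of a set under `eRS`. -/
def preRS (r : ℕ) {n : ℕ} (B : Finset (Fin n)) : Finset (Fin (n - r)) :=
  univ.filter (fun b => eRS b ∈ B)

lemma mem_preRS {B : Finset (Fin n)} {b : Fin (n - r)} : b ∈ preRS r B ↔ eRS b ∈ B := by
  simp [preRS]

lemma preRS_image (C : Finset (Fin (n - r))) : preRS r (C.image eRS) = C := by
  ext b
  rw [mem_preRS, mem_image]
  exact ⟨fun ⟨c, hc, h⟩ => eRS_inj h ▸ hc, fun h => ⟨b, h, rfl⟩⟩

lemma image_preRS (B : Finset (Fin n)) :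
    (preRS r B).image eRS = B.filter (fun a : Fin n => r ≤ (a : ℕ)) := by
  ext a
  rw [mem_image, mem_filter]
  constructor
  · rintro ⟨b, hb, rfl⟩
    exact ⟨mem_preRS.1 hb, le_eRS b⟩
  · rintro ⟨ha, hra⟩
    have key : a = eRS (n := n) (r := r) ⟨(a : ℕ) - r, by have := a.2; omega⟩ := by
      apply Fin.ext
      show (a : ℕ) = r + ((a : ℕ) - r)
      omega
    exact ⟨_, mem_preRS.2 (key ▸ ha), key.symm⟩

variable (hrn : r ≤ n)

/-- The `j`-th special element. -/
def spec (j : Fin r) : Fin n := Fin.castLE hrn j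

lemma spec_lt (j : Fin r) : ((spec hrn j : Fin n) : ℕ) < r := j.2

lemma spec_inj : Function.Injective (spec (n := n) hrn) := by
  intro a b h
  have := congrArg Fin.val h
  exact Fin.ext this

lemma spec_ne_eRS (j : Fin r) (b : Fin (n - r)) : spec hrn j ≠ eRS b := by
  intro h
  have := congrArg Fin.val h
  simp only [spec, eRS, Fin.coe_castLE] at this
  omega

lemma eq_spec_of_lt {a : Fin n} (h : (a : ℕ) < r) : a = spec hrn ⟨(a : ℕ), h⟩ := Fin.ext rfl

lemma eq_eRS_of_le {a : Fin n} (h : r ≤ (a : ℕ)) :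
    a = eRS (n := n) (r := r) ⟨(a : ℕ) - r, by have := a.2; omega⟩ := by
  apply Fin.ext
  show (a : ℕ) = r + ((a : ℕ) - r)
  omega

def blockOf (f : Fin r → Finset (Fin (n - r))) (j : Fin r) : Finset (Fin n) :=
  insert (spec hrn j) ((f j).image eRS)

lemma spec_mem_blockOf (f : Fin r → Finset (Fin (n - r))) (j : Fin r) :
    spec hrn j ∈ blockOf hrn f j := mem_insert_self _ _

lemma mem_blockOf {f : Fin r → Finset (Fin (n - r))} {j : Fin r} {a : Fin n} :
    a ∈ blockOf hrn f j ↔ a = spec hrn j ∨ ∃ b ∈ f j, eRS b = a := by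
  simp [blockOf]

lemma blockOf_filter_lt (f : Fin r → Finset (Fin (n - r))) (j : Fin r) :
    (blockOf hrn f j).filter (fun a : Fin n => (a : ℕ) < r) = {spec hrn j} := by
  ext a
  simp only [mem_filter, mem_singleton, mem_blockOf]
  constructor
  · rintro ⟨h | ⟨b, _, rfl⟩, hlt⟩
    · exact h
    · exact absurd hlt (by have := le_eRS (n := n) b; omega)
  · rintro rfl
    exact ⟨Or.inl rfl, spec_lt hrn j⟩

lemma image_filter_lt (C : Finset (Fin (n - r))) :
    (C.image eRS).filter (fun a : Fin n => (a : ℕ) < r) = ∅ := by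
  rw [filter_eq_empty_iff]
  rintro a ha
  obtain ⟨b, _, rfl⟩ := mem_image.1 ha
  have := le_eRS (n := n) b
  omega

end A

section Phi

variable {n r s : ℕ} (hrn : r ≤ n)

def partsOf (x : YSig (n - r) r) : Finset (Finset (Fin n)) :=
  univ.image (blockOf hrn x.1) ∪ x.2.parts.image (fun C => C.image eRS)

lemma mem_partsOf {x : YSig (n - r) r} {B : Finset (Fin n)} :
    B ∈ partsOf hrn x ↔
      (∃ j, blockOf hrn x.1 j = B) ∨ ∃ C ∈ x.2.parts, C.image eRS = B := by
  simp [partsOf]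

def toPartition (x : YTy (n - r) r s) : Finpartition (Finset.univ : Finset (Fin n)) where
  parts := partsOf hrn x.1
  supIndep := by
    rw [Finset.supIndep_iff_pairwiseDisjoint]
    intro B hB C hC hBC
    show Disjoint B C
    rw [Finset.disjoint_left]
    intro a haB haC
    rcases (mem_partsOf hrn).1 (Finset.mem_coe.1 hB) with ⟨j, rfl⟩ | ⟨D, hD, rfl⟩ <;>
      rcases (mem_partsOf hrn).1 (Finset.mem_coe.1 hC) with ⟨j', rfl⟩ | ⟨D', hD', rfl⟩
    · -- block vs block
      have hjj' : j ≠ j' := fun h => hBC (by rw [h])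
      rcases (mem_blockOf hrn).1 haB with rfl | ⟨b, hb, hb'⟩ <;>
        rcases (mem_blockOf hrn).1 haC with h2 | ⟨b', hb2, hb2'⟩
      · exact hjj' (spec_inj hrn h2)
      · exact spec_ne_eRS hrn j b' hb2'.symm
      · exact spec_ne_eRS hrn j' b (h2 ▸ hb').symm
      · have hbe : b = b' := eRS_inj (by rw [hb', hb2'])
        exact Finset.disjoint_left.1 (x.2.1 j j' hjj') hb (hbe ▸ hb2)
    · -- block vs Q-part
      obtain ⟨b', hb', rfl⟩ := mem_image.1 haC
      rcases (mem_blockOf hrn).1 haB with h2 | ⟨b, hb, hb'2⟩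
      · exact spec_ne_eRS hrn j b' h2.symm
      · have hbe : b = b' := eRS_inj hb'2
        have hd := (Finset.mem_sdiff.1 (x.1.2.le hD' hb')).2
        exact hd (mem_biUnion.2 ⟨j, mem_univ j, hbe ▸ hb⟩)
    · -- Q-part vs block
      obtain ⟨b', hb', rfl⟩ := mem_image.1 haB
      rcases (mem_blockOf hrn).1 haC with h2 | ⟨b, hb, hb'2⟩
      · exact spec_ne_eRS hrn j' b' h2.symm
      · have : b = b' := eRS_inj hb'2
        have hd := (Finset.mem_sdiff.1 (x.1.2.le hD hb')).2
        exact hd (mem_biUnion.2 ⟨j', mem_univ j', this ▸ hb⟩)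
    · -- Q-part vs Q-part
      have hDD' : D ≠ D' := fun h => hBC (by rw [h])
      obtain ⟨b, hb, rfl⟩ := mem_image.1 haB
      obtain ⟨b', hb', h⟩ := mem_image.1 haC
      have : b' = b := eRS_inj h
      exact Finset.disjoint_left.1 (x.1.2.disjoint hD hD' hDD') hb (this ▸ hb')
  sup_parts := by
    rw [Finset.eq_univ_iff_forall]  -- does this apply to sup id = univ?
    intro a
    rw [Finset.mem_sup]
    by_cases h : (a : ℕ) < r
    · refine ⟨blockOf hrn x.1.1 ⟨(a : ℕ), h⟩, (mem_partsOf hrn).2 (Or.inl ⟨_, rfl⟩), ?_⟩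
      have hmem := spec_mem_blockOf hrn x.1.1 ⟨(a : ℕ), h⟩
      have heq : spec hrn ⟨(a : ℕ), h⟩ = a := Fin.ext rfl
      rw [heq] at hmem
      exact hmem
    · push_neg at h
      have key : a = eRS (n := n) (r := r) ⟨(a : ℕ) - r, by have := a.2; omega⟩ := by
        apply Fin.ext
        show (a : ℕ) = r + ((a : ℕ) - r)
        omega
      set b : Fin (n - r) := ⟨(a : ℕ) - r, by have := a.2; omega⟩ with hb
      by_cases hbU : b ∈ Finset.univ.biUnion x.1.1
      · obtain ⟨j, -, hj⟩ := mem_biUnion.1 hbU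
        exact ⟨blockOf hrn x.1.1 j, (mem_partsOf hrn).2 (Or.inl ⟨_, rfl⟩),
          (mem_blockOf hrn).2 (Or.inr ⟨b, hj, key.symm⟩)⟩
      · have hmem : b ∈ Finset.univ \ Finset.univ.biUnion x.1.1 :=
          Finset.mem_sdiff.2 ⟨mem_univ b, hbU⟩
        rw [← x.1.2.sup_parts, Finset.mem_sup] at hmem
        obtain ⟨D, hD, hbD⟩ := hmem
        exact ⟨D.image eRS, (mem_partsOf hrn).2 (Or.inr ⟨D, hD, rfl⟩),
          mem_image.2 ⟨b, hbD, key.symm⟩⟩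
  bot_notMem := by
    intro h
    rcases (mem_partsOf hrn).1 h with ⟨j, hj⟩ | ⟨D, hD, hD'⟩
    · have := spec_mem_blockOf hrn x.1.1 j
      rw [hj] at this
      exact notMem_empty _ this
    · obtain ⟨b, hb⟩ := x.1.2.nonempty_of_mem_parts hD
      have : eRS b ∈ D.image eRS := mem_image.2 ⟨b, hb, rfl⟩
      rw [hD'] at this
      exact notMem_empty _ this

lemma toPartition_parts (x : YTy (n - r) r s) :
    (toPartition hrn x).parts = partsOf hrn x.1 := rfl

lemma blockOf_injective (x : YTy (n - r) r s) : Function.Injective (blockOf hrn x.1.1) := by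
  intro j j' h
  have h1 := spec_mem_blockOf hrn x.1.1 j
  rw [h] at h1
  rcases (mem_blockOf hrn).1 h1 with h2 | ⟨b, _, hb⟩
  · exact spec_inj hrn h2
  · exact absurd hb.symm (spec_ne_eRS hrn j b)

lemma card_partsOf (x : YTy (n - r) r s) : (partsOf hrn x.1).card = r + s := by
  have hdisj : Disjoint (univ.image (blockOf hrn x.1.1))
      (x.1.2.parts.image (fun C => C.image eRS)) := by
    rw [Finset.disjoint_left]
    rintro B hB hB'
    obtain ⟨j, -, rfl⟩ := mem_image.1 hB
    obtain ⟨D, -, hD⟩ := mem_image.1 hB'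
    have h1 := spec_mem_blockOf hrn x.1.1 j
    rw [← hD] at h1
    obtain ⟨b, -, hb⟩ := mem_image.1 h1
    exact spec_ne_eRS hrn j b hb.symm
  rw [partsOf, Finset.card_union_of_disjoint hdisj,
    Finset.card_image_of_injective _ (blockOf_injective hrn x),
    Finset.card_image_of_injective _ (Finset.image_injective eRS_inj), Finset.card_univ,
    Fintype.card_fin, x.2.2]

def Phi (hrk : r ≤ k) (x : YTy (n - r) r (k - r)) : LTy n k r := by
  refine ⟨toPartition hrn x, ?_, ?_⟩
  · rw [toPartition_parts, card_partsOf]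
    omega
  · intro B hB
    rcases (mem_partsOf hrn).1 hB with ⟨j, rfl⟩ | ⟨D, -, rfl⟩
    · rw [blockOf_filter_lt]
      simp
    · rw [image_filter_lt]
      simp

end Phi

section Psi
variable {n k r : ℕ} (hrn : r ≤ n)

def fOf (P : Finpartition (Finset.univ : Finset (Fin n))) (j : Fin r) : Finset (Fin (n - r)) :=
  preRS r (P.part (spec hrn j))

lemma mem_fOf {P : Finpartition (Finset.univ : Finset (Fin n))} {j : Fin r} {b : Fin (n - r)} :
    b ∈ fOf hrn P j ↔ eRS b ∈ P.part (spec hrn j) := mem_preRS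

variable (P : LTy n k r)

lemma uniq_spec {B : Finset (Fin n)} (hB : B ∈ P.1.parts) {a a' : Fin n}
    (ha : a ∈ B) (ha' : a' ∈ B) (h1 : (a : ℕ) < r) (h2 : (a' : ℕ) < r) : a = a' := by
  by_contra hne
  have hsub : ({a, a'} : Finset (Fin n)) ⊆ B.filter (fun x : Fin n => (x : ℕ) < r) := by
    intro x hx
    rcases mem_insert.1 hx with rfl | hx
    · exact mem_filter.2 ⟨ha, h1⟩
    · rw [mem_singleton.1 hx]; exact mem_filter.2 ⟨ha', h2⟩
  have hc := Finset.card_le_card hsub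
  rw [Finset.card_pair hne] at hc
  exact absurd (hc.trans (P.2.2 B hB)) (by omega)

lemma spec_mem_part (j : Fin r) : spec hrn j ∈ P.1.part (spec hrn j) := P.1.mem_part (mem_univ _)

lemma part_spec_mem (j : Fin r) : P.1.part (spec hrn j) ∈ P.1.parts := P.1.part_mem.2 (mem_univ _)

lemma part_spec_inj : Function.Injective (fun j => P.1.part (spec hrn j)) := by
  intro j j' h
  dsimp at h
  have h1 := spec_mem_part hrn P j
  have h2 := spec_mem_part hrn P j'
  rw [← h] at h2
  exact spec_inj hrn
    (uniq_spec P (part_spec_mem hrn P j) h1 h2 (spec_lt hrn j) (spec_lt hrn j'))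

lemma part_eq_of_spec_mem {B : Finset (Fin n)} (hB : B ∈ P.1.parts) {a : Fin n} (ha : a ∈ B)
    (h : (a : ℕ) < r) : B = P.1.part (spec hrn ⟨(a : ℕ), h⟩) := by
  have heq : spec hrn ⟨(a : ℕ), h⟩ = a := Fin.ext rfl
  rw [heq]
  exact (P.1.part_eq_of_mem hB ha).symm

lemma image_part_spec :
    univ.image (fun j => P.1.part (spec hrn j))
      = P.1.parts.filter (fun B => ¬ ∀ a : Fin n, a ∈ B → r ≤ (a : ℕ)) := by
  ext B
  simp only [mem_image, mem_univ, true_and, mem_filter]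
  constructor
  · rintro ⟨j, rfl⟩
    refine ⟨part_spec_mem hrn P j, ?_⟩
    push_neg
    exact ⟨spec hrn j, spec_mem_part hrn P j, by have := spec_lt hrn j; omega⟩
  · rintro ⟨hB, h⟩
    push_neg at h
    obtain ⟨a, ha, hlt⟩ := h
    exact ⟨⟨(a : ℕ), by omega⟩, (part_eq_of_spec_mem hrn P hB ha (by omega)).symm⟩

include hrn in
lemma card_nospec :
    (P.1.parts.filter (fun B => ∀ a : Fin n, a ∈ B → r ≤ (a : ℕ))).card = k - r := by
  have h0 := Finset.card_filter_add_card_filter_not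
    (s := P.1.parts) (p := fun B => ∀ a : Fin n, a ∈ B → r ≤ (a : ℕ))
  have h1 : (P.1.parts.filter (fun B => ¬ ∀ a : Fin n, a ∈ B → r ≤ (a : ℕ))).card = r := by
    rw [← image_part_spec hrn P, Finset.card_image_of_injective _ (part_spec_inj hrn P),
      Finset.card_univ, Fintype.card_fin]
  have h2 := P.2.1
  omega

def QhatParts : Finset (Finset (Fin (n - r))) :=
  (P.1.parts.filter (fun B => ∀ a : Fin n, a ∈ B → r ≤ (a : ℕ))).image (preRS r)

lemma mem_QhatParts {A : Finset (Fin (n - r))} :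
    A ∈ QhatParts P ↔ ∃ B ∈ P.1.parts, (∀ a : Fin n, a ∈ B → r ≤ (a : ℕ)) ∧ preRS r B = A := by
  simp [QhatParts, and_assoc]

lemma image_preRS_self {B : Finset (Fin n)} (h : ∀ a : Fin n, a ∈ B → r ≤ (a : ℕ)) :
    (preRS r B).image eRS = B := by
  rw [image_preRS, Finset.filter_eq_self.2 h]

def Qhat : Finpartition ((univ : Finset (Fin (n - r))) \ univ.biUnion (fOf hrn P.1)) where
  parts := QhatParts P
  supIndep := by
    rw [Finset.supIndep_iff_pairwiseDisjoint]
    intro A hA A' hA' hAA'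
    show Disjoint A A'
    obtain ⟨B, hB, hBsp, rfl⟩ := (mem_QhatParts P).1 (Finset.mem_coe.1 hA)
    obtain ⟨B', hB', hBsp', rfl⟩ := (mem_QhatParts P).1 (Finset.mem_coe.1 hA')
    rw [Finset.disjoint_left]
    intro b hb hb'
    have hBB' : B = B' := P.1.eq_of_mem_parts hB hB' (mem_preRS.1 hb) (mem_preRS.1 hb')
    exact hAA' (by rw [hBB'])
  sup_parts := by
    ext b
    rw [Finset.mem_sup, Finset.mem_sdiff]
    constructor
    · rintro ⟨A, hA, hbA⟩
      obtain ⟨B, hB, hBsp, rfl⟩ := (mem_QhatParts P).1 hA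
      refine ⟨mem_univ b, fun hmem => ?_⟩
      obtain ⟨j, -, hj⟩ := mem_biUnion.1 hmem
      have h1 : eRS b ∈ P.1.part (spec hrn j) := (mem_fOf hrn).1 hj
      have h2 : B = P.1.part (spec hrn j) :=
        P.1.eq_of_mem_parts hB (part_spec_mem hrn P j) (mem_preRS.1 hbA) h1
      have h3 := hBsp (spec hrn j) (h2 ▸ spec_mem_part hrn P j)
      have h4 := spec_lt hrn j
      omega
    · rintro ⟨-, hmem⟩
      have hB : P.1.part (eRS b) ∈ P.1.parts := P.1.part_mem.2 (mem_univ _)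
      have hbB : eRS b ∈ P.1.part (eRS b) := P.1.mem_part (mem_univ _)
      have hBsp : ∀ a : Fin n, a ∈ P.1.part (eRS b) → r ≤ (a : ℕ) := by
        intro a ha
        by_contra hlt
        push_neg at hlt
        have heq := part_eq_of_spec_mem hrn P hB ha hlt
        apply hmem
        refine mem_biUnion.2 ⟨⟨(a : ℕ), hlt⟩, mem_univ _, ?_⟩
        rw [mem_fOf, ← heq]
        exact hbB
      exact ⟨preRS r (P.1.part (eRS b)), (mem_QhatParts P).2 ⟨_, hB, hBsp, rfl⟩,
        mem_preRS.2 hbB⟩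
  bot_notMem := by
    intro h
    obtain ⟨B, hB, hBsp, hpre⟩ := (mem_QhatParts P).1 h
    obtain ⟨a, ha⟩ := P.1.nonempty_of_mem_parts hB
    have hle := hBsp a ha
    have key : a = eRS (n := n) (r := r) ⟨(a : ℕ) - r, by have := a.2; omega⟩ := by
      apply Fin.ext
      show (a : ℕ) = r + ((a : ℕ) - r)
      omega
    have hmem : (⟨(a : ℕ) - r, by have := a.2; omega⟩ : Fin (n - r)) ∈ preRS r B :=
      mem_preRS.2 (key ▸ ha)
    rw [hpre] at hmem
    exact notMem_empty _ hmem

def Psi : YTy (n - r) r (k - r) := by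
  refine ⟨⟨fOf hrn P.1, Qhat hrn P⟩, ?_, ?_⟩
  · intro j j' hjj'
    rw [Finset.disjoint_left]
    intro b hb hb'
    have h1 := (mem_fOf hrn).1 hb
    have h2 := (mem_fOf hrn).1 hb'
    have h3 : P.1.part (spec hrn j) = P.1.part (spec hrn j') :=
      P.1.eq_of_mem_parts (part_spec_mem hrn P j) (part_spec_mem hrn P j') h1 h2
    exact hjj' (part_spec_inj hrn P h3)
  · show (QhatParts P).card = k - r
    rw [QhatParts, Finset.card_image_of_injOn, card_nospec hrn P]
    intro B hB B' hB' h
    have hBsp := (mem_filter.1 (Finset.mem_coe.1 hB)).2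
    have hBsp' := (mem_filter.1 (Finset.mem_coe.1 hB')).2
    rw [← image_preRS_self hBsp, ← image_preRS_self hBsp', h]

end Psi

section RoundTrip
variable {n k r s : ℕ} (hrn : r ≤ n)

lemma part_toPartition_spec (x : YTy (n - r) r s) (j : Fin r) :
    (toPartition hrn x).part (spec hrn j) = blockOf hrn x.1.1 j :=
  (toPartition hrn x).part_eq_of_mem ((mem_partsOf hrn).2 (Or.inl ⟨j, rfl⟩))
    (spec_mem_blockOf hrn _ _)

lemma preRS_blockOf (f : Fin r → Finset (Fin (n - r))) (j : Fin r) :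
    preRS r (blockOf hrn f j) = f j := by
  ext b
  rw [mem_preRS, mem_blockOf hrn]
  constructor
  · rintro (h | ⟨b', hb', h⟩)
    · exact absurd h.symm (spec_ne_eRS hrn j b)
    · exact (eRS_inj h) ▸ hb'
  · intro hb
    exact Or.inr ⟨b, hb, rfl⟩

lemma filter_partsOf (x : YTy (n - r) r s) :
    (partsOf hrn x.1).filter (fun B => ∀ a : Fin n, a ∈ B → r ≤ (a : ℕ))
      = x.1.2.parts.image (fun C => C.image eRS) := by
  ext B
  rw [mem_filter]
  constructor
  · rintro ⟨hB, hsp⟩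
    rcases (mem_partsOf hrn).1 hB with ⟨j, rfl⟩ | ⟨C, hC, rfl⟩
    · exact absurd (hsp (spec hrn j) (spec_mem_blockOf hrn _ _))
        (by have := spec_lt hrn j; omega)
    · exact mem_image.2 ⟨C, hC, rfl⟩
  · intro hB
    obtain ⟨C, hC, rfl⟩ := mem_image.1 hB
    refine ⟨(mem_partsOf hrn).2 (Or.inr ⟨C, hC, rfl⟩), ?_⟩
    intro a ha
    obtain ⟨b, -, rfl⟩ := mem_image.1 ha
    exact le_eRS b

lemma Psi_Phi (hrk : r ≤ k) (x : YTy (n - r) r (k - r)) :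
    Psi hrn (Phi hrn hrk x) = x := by
  refine Subtype.ext (YSig.ext' ?_ ?_)
  · funext j
    show fOf hrn (toPartition hrn x) j = x.1.1 j
    rw [fOf, part_toPartition_spec, preRS_blockOf]
  · show QhatParts (Phi hrn hrk x) = x.1.2.parts
    have h1 : QhatParts (Phi hrn hrk x)
        = ((partsOf hrn x.1).filter
            (fun B => ∀ a : Fin n, a ∈ B → r ≤ (a : ℕ))).image (preRS r) := rfl
    rw [h1, filter_partsOf hrn x, Finset.image_image]
    refine Eq.trans (Finset.image_congr ?_) Finset.image_id
    intro C _
    exact preRS_image C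

variable (P : LTy n k r)

lemma blockOf_fOf (j : Fin r) : blockOf hrn (fOf hrn P.1) j = P.1.part (spec hrn j) := by
  rw [blockOf, fOf, image_preRS]
  ext a
  rw [mem_insert, mem_filter]
  constructor
  · rintro (rfl | ⟨ha, -⟩)
    · exact spec_mem_part hrn P j
    · exact ha
  · intro ha
    by_cases h : (a : ℕ) < r
    · exact Or.inl
        (uniq_spec P (part_spec_mem hrn P j) ha (spec_mem_part hrn P j) h (spec_lt hrn j))
    · exact Or.inr ⟨ha, by omega⟩

lemma image_QhatParts : (QhatParts P).image (fun C => C.image eRS)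
    = P.1.parts.filter (fun B => ∀ a : Fin n, a ∈ B → r ≤ (a : ℕ)) := by
  rw [QhatParts, Finset.image_image]
  refine Eq.trans (Finset.image_congr ?_) Finset.image_id
  intro B hB
  exact image_preRS_self ((mem_filter.1 (Finset.mem_coe.1 hB)).2)

lemma Phi_Psi (hrk : r ≤ k) : Phi hrn hrk (Psi hrn P) = P := by
  refine Subtype.ext (Finpartition.ext ?_)
  show partsOf hrn (Psi hrn P).1 = P.1.parts
  rw [partsOf]
  have h1 : univ.image (blockOf hrn (Psi hrn P).1.1)
      = univ.image (fun j => P.1.part (spec hrn j)) :=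
    Finset.image_congr (fun j _ => blockOf_fOf hrn P j)
  rw [h1, image_part_spec hrn P]
  have h2 : (Psi hrn P).1.2.parts = QhatParts P := rfl
  rw [h2, image_QhatParts P, union_comm, Finset.filter_union_filter_not_eq]

end RoundTrip

lemma auxA {n k r : ℕ} (hrk : r ≤ k) (hkn : k ≤ n) :
    Nat.card (LTy n k r) = Nat.card (YTy (n - r) r (k - r)) := by
  have hrn : r ≤ n := hrk.trans hkn
  exact Nat.card_congr
    ⟨Psi hrn, Phi hrn hrk, fun P => Phi_Psi hrn P hrk, fun x => Psi_Phi hrn hrk x⟩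

section Fiber2
variable {m r s : ℕ}

def suppOf (x : YTy m r s) : Finset (Fin r) := univ.filter (fun j => (x.1.1 j).Nonempty)

lemma mem_suppOf {x : YTy m r s} {j : Fin r} : j ∈ suppOf x ↔ (x.1.1 j).Nonempty := by
  simp [suppOf]

section Fiber

variable (T : Finset (Fin r)) {i : ℕ} (hT : T.card = i)

lemma ground_eq (f : Fin r → Finset (Fin m))
    (hsupp : ∀ j, (f j).Nonempty ↔ j ∈ T) (σ : Fin i ≃o T) :
    (Finset.univ : Finset (Fin r)).biUnion f
      = Finset.univ.biUnion (fun a : Fin i => f ((σ a : Fin r))) := by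
  ext b
  simp only [mem_biUnion, mem_univ, true_and]
  constructor
  · rintro ⟨j, hb⟩
    have hj : j ∈ T := (hsupp j).1 ⟨b, hb⟩
    refine ⟨σ.symm ⟨j, hj⟩, ?_⟩
    simpa using hb
  · rintro ⟨a, hb⟩; exact ⟨σ a, hb⟩

/-- Extend a `Fin i`-indexed family to a `Fin r`-indexed family supported on `T`. -/
def extFam (σ : Fin i ≃o T) (B : Fin i → Finset (Fin m)) (j : Fin r) : Finset (Fin m) :=
  if h : j ∈ T then B (σ.symm ⟨j, h⟩) else ∅

lemma ground_eq' (σ : Fin i ≃o T) (B : Fin i → Finset (Fin m)) :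
    (Finset.univ : Finset (Fin i)).biUnion B
      = Finset.univ.biUnion (extFam T σ B) := by
  ext b
  simp only [mem_biUnion, mem_univ, true_and]
  constructor
  · rintro ⟨a, hb⟩
    refine ⟨σ a, ?_⟩
    rw [extFam, dif_pos (σ a).2]
    have h1 : (⟨((σ a : T) : Fin r), (σ a).2⟩ : {x // x ∈ T}) = σ a := Subtype.ext rfl
    rw [h1, σ.symm_apply_apply]
    exact hb
  · rintro ⟨j, hb⟩
    rw [extFam] at hb
    by_cases h : j ∈ T
    · rw [dif_pos h] at hb; exact ⟨σ.symm ⟨j, h⟩, hb⟩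
    · rw [dif_neg h] at hb; simp at hb

variable {T}

lemma hs (y : {y : YTy m r s // suppOf y = T}) (j : Fin r) :
    (y.1.1.1 j).Nonempty ↔ j ∈ T :=
  mem_suppOf.symm.trans ⟨fun hj => y.2 ▸ hj, fun hj => y.2.symm ▸ hj⟩

def toMixed (σ : Fin i ≃o T) (y : {y : YTy m r s // suppOf y = T}) : MixedTy m (i + 1) s :=
  ⟨⟨fun a : Fin i => y.1.1.1 (σ a),
    y.1.1.2.copy (by rw [ground_eq T y.1.1.1 (hs y) σ])⟩,
    fun a => (hs y _).2 (σ a).2,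
    fun a a' ha => y.1.2.1 _ _ (fun h => ha (σ.injective (Subtype.coe_injective h))),
    y.1.2.2⟩

def ofMixed (σ : Fin i ≃o T) (z : MixedTy m (i + 1) s) : {y : YTy m r s // suppOf y = T} :=
  ⟨⟨⟨extFam T σ z.1.1, z.1.2.copy (by rw [ground_eq' T σ z.1.1])⟩,
    by
      intro j j' hjj'
      show Disjoint (extFam T σ z.1.1 j) (extFam T σ z.1.1 j')
      unfold extFam
      split_ifs with h h' h'
      · exact z.2.2.1 _ _ (fun he => hjj'
          (by simpa using congrArg Subtype.val (σ.symm.injective he)))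
      · exact disjoint_empty_right _
      · exact disjoint_empty_left _
      · exact disjoint_empty_left _,
    z.2.2.2⟩,
    by
      ext j
      rw [mem_suppOf]
      show (extFam T σ z.1.1 j).Nonempty ↔ j ∈ T
      unfold extFam
      split_ifs with h
      · simp only [h, iff_true]; exact z.2.1 _
      · simp [h]⟩

def fiberEquiv (σ : Fin i ≃o T) :
    {y : YTy m r s // suppOf y = T} ≃ MixedTy m (i + 1) s where
  toFun := toMixed σ
  invFun := ofMixed σ
  left_inv := by
    intro y
    refine Subtype.ext (Subtype.ext (YSig.ext' ?_ rfl))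
    show extFam T σ (fun a : Fin i => y.1.1.1 (σ a)) = y.1.1.1
    funext j
    unfold extFam
    split_ifs with h
    · show y.1.1.1 ((σ (σ.symm ⟨j, h⟩) : T) : Fin r) = y.1.1.1 j
      rw [σ.apply_symm_apply]
    · exact (not_nonempty_iff_eq_empty.1 (fun hne => h ((hs y j).1 hne))).symm
  right_inv := by
    intro z
    refine Subtype.ext (YSig.ext' ?_ rfl)
    show (fun a : Fin i => extFam T σ z.1.1 (σ a)) = z.1.1
    funext a
    unfold extFam
    rw [dif_pos (σ a).2]
    have h1 : (⟨((σ a : T) : Fin r), (σ a).2⟩ : {x // x ∈ T}) = σ a := Subtype.ext rfl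
    rw [h1, σ.symm_apply_apply]

end Fiber

lemma natcard_sigma {ι : Type*} [Fintype ι] (α : ι → Type*) [∀ i, Finite (α i)] :
    Nat.card (Σ i, α i) = ∑ i, Nat.card (α i) := by
  letI := fun i => Fintype.ofFinite (α i)
  simp [Nat.card_eq_fintype_card]


lemma auxB (m r s : ℕ) :
    Nat.card (YTy m r s)
      = ∑ i ∈ Finset.range (r + 1), r.choose i * mixedStirling m (i + 1) s := by
  classical
  have h1 : Nat.card (YTy m r s)
      = ∑ T : Finset (Fin r), Nat.card {y : YTy m r s // suppOf y = T} := by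
    rw [← natcard_sigma]
    exact Nat.card_congr (Equiv.sigmaFiberEquiv suppOf).symm
  have h2 : ∀ T : Finset (Fin r),
      Nat.card {y : YTy m r s // suppOf y = T} = mixedStirling m (T.card + 1) s := by
    intro T
    rw [mixedStirling_eq_card]
    exact Nat.card_congr (fiberEquiv (T.orderIsoOfFin rfl))
  rw [h1]
  simp only [h2]
  have hmap : ∀ T ∈ (univ : Finset (Finset (Fin r))), T.card ∈ Finset.range (r + 1) := by
    intro T _
    simp only [Finset.mem_range]
    exact Nat.lt_succ_of_le (by simpa using Finset.card_le_card (Finset.subset_univ T))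
  rw [← Finset.sum_fiberwise_of_maps_to hmap (fun T => mixedStirling m (T.card + 1) s)]
  refine Finset.sum_congr rfl (fun i _ => ?_)
  have : ∀ T ∈ (univ : Finset (Finset (Fin r))).filter (fun T => T.card = i),
      mixedStirling m (T.card + 1) s = mixedStirling m (i + 1) s := by
    intro T hT
    rw [(Finset.mem_filter.1 hT).2]
  rw [Finset.sum_congr rfl this, Finset.sum_const]
  congr 1
  have : (univ : Finset (Finset (Fin r))).filter (fun T => T.card = i)
      = (univ : Finset (Fin r)).powersetCard i := by
    rw [Finset.powersetCard_eq_filter, Finset.powerset_univ]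
  rw [this, Finset.card_powersetCard]
  simp

theorem rStirling_eq_sum_mixedStirling (n k r : ℕ)
    (hr : 1 ≤ r) (hrk : r ≤ k) (hkn : k ≤ n) :
    rStirling n k r =
      ∑ i ∈ Finset.range (r + 1),
        r.choose i * mixedStirling (n - r) (i + 1) (k - r) := by
  rw [rStirling_eq_card, auxA hrk hkn, auxB]
end Fiber2
end
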